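/- Let m ≥ 2, let e₁, e₂ be the first two standard basis vectors of ℝ^m, let W := {0}×{0}×ℝ^{m−2} ⊆ ℝ^m be the subspace of vectors whose first two coordinates vanish, and let w₁, w₂ ∈ W with ‖w₁‖² + ‖w₂‖² ≤ 10⁻²⁰. Set v₁ := e₁ + w₁, v₂ := e₂ + w₂, and let T := span{v₁, v₂} with π_T the Euclidean orthogonal projection onto T. Then for every X ∈ W: ‖π_T(X)‖ ≤ 10⁻⁹·‖X‖, and consequently ‖X‖ ≤ 2·‖X − π_T(X)‖. -/

import Mathlib

set_option maxHeartbeats 1000000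

open RealInnerProductSpace


/-- **Projection lemma (flat-metric core).**  Let `m ≥ 2`, `W ⊆ ℝ^m` the subspace of
vectors whose first two coordinates vanish, `w₁, w₂ ∈ W` with `‖w₁‖² + ‖w₂‖² ≤ 10⁻²⁰`,
`v₁ := e₁ + w₁`, `v₂ := e₂ + w₂`, `T := span{v₁, v₂}`, and `π_T` the Euclidean orthogonal
projection onto `T`.  Then for every `X ∈ W`: `‖π_T(X)‖ ≤ 10⁻⁹·‖X‖`, and consequently
`‖X‖ ≤ 2·‖X − π_T(X)‖`. -/
theorem stmt16 (m : ℕ) (hm : 2 ≤ m)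
    (w₁ w₂ : EuclideanSpace ℝ (Fin m))
    (hw₁0 : w₁ ⟨0, by omega⟩ = 0) (hw₁1 : w₁ ⟨1, by omega⟩ = 0)
    (hw₂0 : w₂ ⟨0, by omega⟩ = 0) (hw₂1 : w₂ ⟨1, by omega⟩ = 0)
    (hsmall : ‖w₁‖ ^ 2 + ‖w₂‖ ^ 2 ≤ 1e-20)
    (v₁ v₂ : EuclideanSpace ℝ (Fin m))
    (hv₁ : v₁ = EuclideanSpace.single ⟨0, by omega⟩ 1 + w₁)
    (hv₂ : v₂ = EuclideanSpace.single ⟨1, by omega⟩ 1 + w₂)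
    (T : Submodule ℝ (EuclideanSpace ℝ (Fin m)))
    (hT : T = Submodule.span ℝ {v₁, v₂}) :
    ∀ X : EuclideanSpace ℝ (Fin m), X ⟨0, by omega⟩ = 0 → X ⟨1, by omega⟩ = 0 →
      ‖(T.orthogonalProjection X : EuclideanSpace ℝ (Fin m))‖ ≤ 1e-9 * ‖X‖
      ∧ ‖X‖ ≤ 2 * ‖X - (T.orthogonalProjection X : EuclideanSpace ℝ (Fin m))‖ := by
  intro X hX0 hX1
  set p : EuclideanSpace ℝ (Fin m) := (T.orthogonalProjection X : EuclideanSpace ℝ (Fin m)) with hp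
  clear_value p
  have hpT : p ∈ T := hp ▸ (T.orthogonalProjection X).2
  rw [hT] at hpT
  obtain ⟨a, b, hab⟩ := Submodule.mem_span_pair.mp hpT
  have h01 : (⟨0, by omega⟩ : Fin m) ≠ ⟨1, by omega⟩ := by simp [Fin.ext_iff]
  have hpa : p ⟨0, by omega⟩ = a := by
    rw [← hab, hv₁, hv₂]
    simp [hw₁0, hw₂0, EuclideanSpace.single_apply, h01, h01.symm]
  have hpb : p ⟨1, by omega⟩ = b := by
    rw [← hab, hv₁, hv₂]
    simp [hw₁1, hw₂1, EuclideanSpace.single_apply, h01, h01.symm]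
  have hcoord : ∀ i : Fin m, |p i| ≤ ‖p‖ := by
    intro i
    have h := abs_real_inner_le_norm (EuclideanSpace.single i (1:ℝ)) p
    simpa [EuclideanSpace.inner_single_left, EuclideanSpace.norm_single] using h
  have ha : |a| ≤ ‖p‖ := hpa ▸ hcoord _
  have hb : |b| ≤ ‖p‖ := hpb ▸ hcoord _
  -- inner products with v₁, v₂
  have hiv₁ : ⟪X, v₁⟫ = ⟪X, w₁⟫ := by
    rw [hv₁, inner_add_right, EuclideanSpace.inner_single_right]
    simp [hX0]
  have hiv₂ : ⟪X, v₂⟫ = ⟪X, w₂⟫ := by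
    rw [hv₂, inner_add_right, EuclideanSpace.inner_single_right]
    simp [hX1]
  -- ‖p‖² = ⟪X, p⟫
  have horth : ⟪X - p, p⟫ = 0 := by
    rw [hp]
    exact T.starProjection_inner_eq_zero X _ (T.orthogonalProjection X).2
  have hkey : ‖p‖ ^ 2 = a * ⟪X, w₁⟫ + b * ⟪X, w₂⟫ := by
    have h1 : ⟪X, p⟫ = ‖p‖ ^ 2 := by
      have := inner_sub_left (𝕜 := ℝ) X p p
      rw [horth] at this
      have h2 : ⟪p, p⟫ = ‖p‖ ^ 2 := real_inner_self_eq_norm_sq p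
      linarith
    rw [← h1, ← hab, inner_add_right, real_inner_smul_right, real_inner_smul_right,
      hiv₁, hiv₂]
  -- bound inner products
  have hw₁n : ‖w₁‖ ≤ 1e-10 := by nlinarith [norm_nonneg w₁, norm_nonneg w₂, sq_nonneg (‖w₁‖ - 1e-10)]
  have hw₂n : ‖w₂‖ ≤ 1e-10 := by nlinarith [norm_nonneg w₁, norm_nonneg w₂, sq_nonneg (‖w₂‖ - 1e-10)]
  have hi1 : |⟪X, w₁⟫| ≤ ‖X‖ * ‖w₁‖ := abs_real_inner_le_norm X w₁
  have hi2 : |⟪X, w₂⟫| ≤ ‖X‖ * ‖w₂‖ := abs_real_inner_le_norm X w₂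
  have hXn : (0:ℝ) ≤ ‖X‖ := norm_nonneg X
  have hpn : (0:ℝ) ≤ ‖p‖ := norm_nonneg p
  have hbound : ‖p‖ ^ 2 ≤ 2e-10 * ‖p‖ * ‖X‖ := by
    have h1 : a * ⟪X, w₁⟫ ≤ |a| * |⟪X, w₁⟫| := by
      calc a * ⟪X, w₁⟫ ≤ |a * ⟪X, w₁⟫| := le_abs_self _
        _ = |a| * |⟪X, w₁⟫| := abs_mul _ _
    have h2 : b * ⟪X, w₂⟫ ≤ |b| * |⟪X, w₂⟫| := by
      calc b * ⟪X, w₂⟫ ≤ |b * ⟪X, w₂⟫| := le_abs_self _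
        _ = |b| * |⟪X, w₂⟫| := abs_mul _ _
    have ha0 : (0:ℝ) ≤ |a| := abs_nonneg a
    have hb0 : (0:ℝ) ≤ |b| := abs_nonneg b
    have t1 : |a| * |⟪X, w₁⟫| ≤ ‖p‖ * (‖X‖ * ‖w₁‖) :=
      mul_le_mul ha hi1 (abs_nonneg _) hpn
    have t2 : |b| * |⟪X, w₂⟫| ≤ ‖p‖ * (‖X‖ * ‖w₂‖) :=
      mul_le_mul hb hi2 (abs_nonneg _) hpn
    have t3 : ‖p‖ * ‖X‖ * ‖w₁‖ ≤ ‖p‖ * ‖X‖ * 1e-10 :=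
      mul_le_mul_of_nonneg_left hw₁n (mul_nonneg hpn hXn)
    have t4 : ‖p‖ * ‖X‖ * ‖w₂‖ ≤ ‖p‖ * ‖X‖ * 1e-10 :=
      mul_le_mul_of_nonneg_left hw₂n (mul_nonneg hpn hXn)
    nlinarith [t1, t2, t3, t4]
  have hmain : ‖p‖ ≤ 1e-9 * ‖X‖ := by
    rcases eq_or_lt_of_le hpn with h | h
    · rw [← h]; positivity
    · nlinarith
  refine ⟨hmain, ?_⟩
  have htri : ‖X‖ - ‖p‖ ≤ ‖X - p‖ := norm_sub_norm_le X p
  linarith
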